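/- Let v : [0,1] × [0,2π] → ℝ² be C², with |v(r,θ)| = 1 everywhere and v(r,0) = v(r,2π) for all r. Then the function r ↦ ∫_0^{2π} v(r,θ) ∧ ∂_θ v(r,θ) dθ is constant in r. -/

import Mathlib

open Set MeasureTheory intervalIntegral Metric

lemma stmt7_wedge {u a b : ℝ × ℝ} (hu : u.1 ^ 2 + u.2 ^ 2 = 1)
    (ha : u.1 * a.1 + u.2 * a.2 = 0) (hb : u.1 * b.1 + u.2 * b.2 = 0) :
    a.1 * b.2 - a.2 * b.1 = 0 := by
  linear_combination (b.2 * u.1 - b.1 * u.2) * ha - (a.2 * u.1 - a.1 * u.2) * hb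
    - (a.1 * b.2 - a.2 * b.1) * hu

section aux

variable {v : ℝ × ℝ → ℝ × ℝ}

lemma stmt7_slice (hv : ContDiff ℝ 2 v) {c : ℝ → ℝ × ℝ} {c' : ℝ × ℝ} {x : ℝ}
    (hc : HasDerivAt c c' x) :
    HasDerivAt (fun s => v (c s)) (fderiv ℝ v (c x) c') x :=
  ((hv.differentiable two_ne_zero) (c x)).hasFDerivAt.comp_hasDerivAt x hc

lemma stmt7_fderiv_contDiff (hv : ContDiff ℝ 2 v) : ContDiff ℝ 1 (fderiv ℝ v) :=
  hv.fderiv_right (le_refl _)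

lemma stmt7_vd_cont (hv : ContDiff ℝ 2 v) (u : ℝ × ℝ) :
    Continuous fun p => fderiv ℝ v p u :=
  (ContinuousLinearMap.apply ℝ (ℝ × ℝ) u).continuous.comp (stmt7_fderiv_contDiff hv).continuous

lemma stmt7_snd_deriv (hv : ContDiff ℝ 2 v) (u : ℝ × ℝ) {c : ℝ → ℝ × ℝ} {c' : ℝ × ℝ} {x : ℝ}
    (hc : HasDerivAt c c' x) :
    HasDerivAt (fun s => fderiv ℝ v (c s) u) (fderiv ℝ (fderiv ℝ v) (c x) c' u) x := by
  have h1 := stmt7_fderiv_contDiff hv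
  have h2 : HasFDerivAt (fderiv ℝ v) (fderiv ℝ (fderiv ℝ v) (c x)) (c x) :=
    ((h1.differentiable one_ne_zero) (c x)).hasFDerivAt
  have h3 := h2.comp_hasDerivAt x hc
  exact (ContinuousLinearMap.apply ℝ (ℝ × ℝ) u).hasFDerivAt.comp_hasDerivAt x h3

lemma stmt7_snd_cont (hv : ContDiff ℝ 2 v) (a b : ℝ × ℝ) :
    Continuous fun p => fderiv ℝ (fderiv ℝ v) p a b := by
  have h1 : Continuous (fderiv ℝ (fderiv ℝ v)) :=
    ((stmt7_fderiv_contDiff hv).fderiv_right (m := 0) (by norm_num)).continuous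
  exact (ContinuousLinearMap.apply ℝ (ℝ × ℝ) b).continuous.comp
    ((ContinuousLinearMap.apply ℝ ((ℝ × ℝ) →L[ℝ] ℝ × ℝ) a).continuous.comp h1)

lemma stmt7_symm (hv : ContDiff ℝ 2 v) (p a b : ℝ × ℝ) :
    fderiv ℝ (fderiv ℝ v) p a b = fderiv ℝ (fderiv ℝ v) p b a :=
  second_derivative_symmetric (fun y => ((hv.differentiable two_ne_zero) y).hasFDerivAt)
    (((stmt7_fderiv_contDiff hv).differentiable one_ne_zero p).hasFDerivAt) a b

end aux

section aux2
variable {v : ℝ × ℝ → ℝ × ℝ}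

lemma stmt7_S_uniqueDiff : UniqueDiffOn ℝ ((Icc (0:ℝ) 1) ×ˢ (Icc (0:ℝ) (2 * Real.pi))) := by
  apply uniqueDiffOn_convex ((convex_Icc _ _).prod (convex_Icc _ _))
  rw [interior_prod_eq, interior_Icc, interior_Icc]
  exact ⟨(1/2, 1), by norm_num, by constructor <;> [norm_num; nlinarith [Real.pi_gt_three]]⟩

lemma stmt7_orth (hv : ContDiff ℝ 2 v)
    (hnorm : ∀ p ∈ (Icc (0:ℝ) 1) ×ˢ (Icc (0:ℝ) (2 * Real.pi)),
      (v p).1 ^ 2 + (v p).2 ^ 2 = 1)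
    {p : ℝ × ℝ} (hp : p ∈ (Icc (0:ℝ) 1) ×ˢ (Icc (0:ℝ) (2 * Real.pi))) (u : ℝ × ℝ) :
    (v p).1 * (fderiv ℝ v p u).1 + (v p).2 * (fderiv ℝ v p u).2 = 0 := by
  have hfd : HasFDerivAt v (fderiv ℝ v p) p := ((hv.differentiable two_ne_zero) p).hasFDerivAt
  have h1 : HasFDerivAt (fun q => (v q).1)
      ((ContinuousLinearMap.fst ℝ ℝ ℝ).comp (fderiv ℝ v p)) p :=
    (ContinuousLinearMap.fst ℝ ℝ ℝ).hasFDerivAt.comp p hfd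
  have h2 : HasFDerivAt (fun q => (v q).2)
      ((ContinuousLinearMap.snd ℝ ℝ ℝ).comp (fderiv ℝ v p)) p :=
    (ContinuousLinearMap.snd ℝ ℝ ℝ).hasFDerivAt.comp p hfd
  have hg := (h1.mul h1).add (h2.mul h2)
  have hconst : HasFDerivWithinAt (fun q => (v q).1 * (v q).1 + (v q).2 * (v q).2)
      (0 : (ℝ × ℝ) →L[ℝ] ℝ) ((Icc (0:ℝ) 1) ×ˢ (Icc (0:ℝ) (2 * Real.pi))) p := by
    exact (hasFDerivWithinAt_const (1:ℝ) p _).congr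
      (fun q hq => by have := hnorm q hq; nlinarith) (by have := hnorm p hp; nlinarith)
  have heq := stmt7_S_uniqueDiff.eq hp hg.hasFDerivWithinAt hconst
  have := congrArg (fun (L : (ℝ × ℝ) →L[ℝ] ℝ) => L u) heq
  simp only [ContinuousLinearMap.add_apply, ContinuousLinearMap.smul_apply,
    ContinuousLinearMap.comp_apply, ContinuousLinearMap.coe_fst', ContinuousLinearMap.coe_snd',
    smul_eq_mul, pow_one, ContinuousLinearMap.zero_apply] at this
  linarith

lemma stmt7_vr_per (hv : ContDiff ℝ 2 v)
    (hper : ∀ r ∈ Icc (0:ℝ) 1, v (r, 0) = v (r, 2 * Real.pi))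
    {r : ℝ} (hr : r ∈ Icc (0:ℝ) 1) :
    fderiv ℝ v (r, 0) (1, 0) = fderiv ℝ v (r, 2 * Real.pi) (1, 0) := by
  have h0 : HasDerivAt (fun s => v (s, 0)) (fderiv ℝ v (r, 0) (1, 0)) r :=
    stmt7_slice hv ((hasDerivAt_id r).prodMk (hasDerivAt_const r 0))
  have h1 : HasDerivAt (fun s => v (s, 2 * Real.pi)) (fderiv ℝ v (r, 2 * Real.pi) (1, 0)) r :=
    stmt7_slice hv ((hasDerivAt_id r).prodMk (hasDerivAt_const r (2 * Real.pi)))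
  have hsub := h0.sub h1
  have hzero : HasDerivWithinAt (fun s => v (s, 0) - v (s, 2 * Real.pi)) 0 (Icc (0:ℝ) 1) r :=
    (hasDerivWithinAt_const r _ (0 : ℝ × ℝ)).congr
      (fun q hq => by simp [hper q hq]) (by simp [hper r hr])
  have := UniqueDiffWithinAt.eq_deriv _ ((uniqueDiffOn_Icc zero_lt_one) r hr)
    hsub.hasDerivWithinAt hzero
  exact sub_eq_zero.mp this

end aux2

section core
variable (v : ℝ × ℝ → ℝ × ℝ)

noncomputable def s7w (p : ℝ × ℝ) : ℝ :=
  (v p).1 * (fderiv ℝ v p (0, 1)).2 - (v p).2 * (fderiv ℝ v p (0, 1)).1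

noncomputable def s7u (p : ℝ × ℝ) : ℝ :=
  (v p).1 * (fderiv ℝ v p (1, 0)).2 - (v p).2 * (fderiv ℝ v p (1, 0)).1

noncomputable def s7W (p : ℝ × ℝ) : ℝ :=
  ((fderiv ℝ v p (1, 0)).1 * (fderiv ℝ v p (0, 1)).2
      + (v p).1 * (fderiv ℝ (fderiv ℝ v) p (1, 0) (0, 1)).2)
    - ((fderiv ℝ v p (1, 0)).2 * (fderiv ℝ v p (0, 1)).1
      + (v p).2 * (fderiv ℝ (fderiv ℝ v) p (1, 0) (0, 1)).1)

noncomputable def s7W2 (p : ℝ × ℝ) : ℝ :=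
  ((fderiv ℝ v p (0, 1)).1 * (fderiv ℝ v p (1, 0)).2
      + (v p).1 * (fderiv ℝ (fderiv ℝ v) p (0, 1) (1, 0)).2)
    - ((fderiv ℝ v p (0, 1)).2 * (fderiv ℝ v p (1, 0)).1
      + (v p).2 * (fderiv ℝ (fderiv ℝ v) p (0, 1) (1, 0)).1)

variable {v}

lemma s7w_cont (hv : ContDiff ℝ 2 v) : Continuous (s7w v) := by
  have h0 := hv.continuous
  have h1 := stmt7_vd_cont hv ((0:ℝ), (1:ℝ))
  fun_prop [s7w]

lemma s7W_cont (hv : ContDiff ℝ 2 v) : Continuous (s7W v) := by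
  have h1 := stmt7_vd_cont hv ((0:ℝ), (1:ℝ))
  have h2 := stmt7_vd_cont hv ((1:ℝ), (0:ℝ))
  have h0 := hv.continuous
  have h3 := stmt7_snd_cont hv ((1:ℝ), (0:ℝ)) ((0:ℝ), (1:ℝ))
  fun_prop [s7W]

lemma s7W2_cont (hv : ContDiff ℝ 2 v) : Continuous (s7W2 v) := by
  have h1 := stmt7_vd_cont hv ((0:ℝ), (1:ℝ))
  have h2 := stmt7_vd_cont hv ((1:ℝ), (0:ℝ))
  have h0 := hv.continuous
  have h3 := stmt7_snd_cont hv ((0:ℝ), (1:ℝ)) ((1:ℝ), (0:ℝ))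
  fun_prop [s7W2]

/-- the `r`-derivative of `θ ↦ w` -/
lemma s7w_hasDerivAt (hv : ContDiff ℝ 2 v) (t x : ℝ) :
    HasDerivAt (fun x => s7w v (x, t)) (s7W v (x, t)) x := by
  have hc : HasDerivAt (fun s : ℝ => (s, t)) ((1:ℝ), (0:ℝ)) x :=
    (hasDerivAt_id x).prodMk (hasDerivAt_const x t)
  have Hv := stmt7_slice hv hc
  have Hd := stmt7_snd_deriv hv ((0:ℝ), (1:ℝ)) hc
  have A1 : HasDerivAt (fun x => (v (x, t)).1) ((fderiv ℝ v (x, t) (1, 0)).1) x :=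
    (ContinuousLinearMap.fst ℝ ℝ ℝ).hasFDerivAt.comp_hasDerivAt x Hv
  have A2 : HasDerivAt (fun x => (v (x, t)).2) ((fderiv ℝ v (x, t) (1, 0)).2) x :=
    (ContinuousLinearMap.snd ℝ ℝ ℝ).hasFDerivAt.comp_hasDerivAt x Hv
  have B1 : HasDerivAt (fun x => (fderiv ℝ v (x, t) (0, 1)).1)
      ((fderiv ℝ (fderiv ℝ v) (x, t) (1, 0) (0, 1)).1) x :=
    (ContinuousLinearMap.fst ℝ ℝ ℝ).hasFDerivAt.comp_hasDerivAt x Hd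
  have B2 : HasDerivAt (fun x => (fderiv ℝ v (x, t) (0, 1)).2)
      ((fderiv ℝ (fderiv ℝ v) (x, t) (1, 0) (0, 1)).2) x :=
    (ContinuousLinearMap.snd ℝ ℝ ℝ).hasFDerivAt.comp_hasDerivAt x Hd
  have := (A1.mul B2).sub (A2.mul B1)
  simp only [s7w, s7W]
  exact this

/-- the `θ`-derivative of `θ ↦ u` -/
lemma s7u_hasDerivAt (hv : ContDiff ℝ 2 v) (r t : ℝ) :
    HasDerivAt (fun t => s7u v (r, t)) (s7W2 v (r, t)) t := by
  have hc : HasDerivAt (fun s : ℝ => (r, s)) ((0:ℝ), (1:ℝ)) t :=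
    (hasDerivAt_const t r).prodMk (hasDerivAt_id t)
  have Hv := stmt7_slice hv hc
  have Hd := stmt7_snd_deriv hv ((1:ℝ), (0:ℝ)) hc
  have A1 : HasDerivAt (fun t => (v (r, t)).1) ((fderiv ℝ v (r, t) (0, 1)).1) t :=
    (ContinuousLinearMap.fst ℝ ℝ ℝ).hasFDerivAt.comp_hasDerivAt t Hv
  have A2 : HasDerivAt (fun t => (v (r, t)).2) ((fderiv ℝ v (r, t) (0, 1)).2) t :=
    (ContinuousLinearMap.snd ℝ ℝ ℝ).hasFDerivAt.comp_hasDerivAt t Hv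
  have B1 : HasDerivAt (fun t => (fderiv ℝ v (r, t) (1, 0)).1)
      ((fderiv ℝ (fderiv ℝ v) (r, t) (0, 1) (1, 0)).1) t :=
    (ContinuousLinearMap.fst ℝ ℝ ℝ).hasFDerivAt.comp_hasDerivAt t Hd
  have B2 : HasDerivAt (fun t => (fderiv ℝ v (r, t) (1, 0)).2)
      ((fderiv ℝ (fderiv ℝ v) (r, t) (0, 1) (1, 0)).2) t :=
    (ContinuousLinearMap.snd ℝ ℝ ℝ).hasFDerivAt.comp_hasDerivAt t Hd
  have := (A1.mul B2).sub (A2.mul B1)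
  simp only [s7u, s7W2]
  exact this

end core

section core2
variable {v : ℝ × ℝ → ℝ × ℝ}

lemma s7W_eq_W2 (hv : ContDiff ℝ 2 v)
    (hnorm : ∀ p ∈ (Icc (0:ℝ) 1) ×ˢ (Icc (0:ℝ) (2 * Real.pi)),
      (v p).1 ^ 2 + (v p).2 ^ 2 = 1)
    {p : ℝ × ℝ} (hp : p ∈ (Icc (0:ℝ) 1) ×ˢ (Icc (0:ℝ) (2 * Real.pi))) :
    s7W v p = s7W2 v p := by
  have hq := stmt7_symm hv p ((1:ℝ), (0:ℝ)) ((0:ℝ), (1:ℝ))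
  have hq1 := congrArg Prod.fst hq
  have hq2 := congrArg Prod.snd hq
  have hw := stmt7_wedge (hnorm p hp)
    (stmt7_orth hv hnorm hp ((1:ℝ), (0:ℝ))) (stmt7_orth hv hnorm hp ((0:ℝ), (1:ℝ)))
  simp only [s7W, s7W2]
  rw [hq1, hq2]
  linarith

lemma s7_integral_W_zero (hv : ContDiff ℝ 2 v)
    (hnorm : ∀ p ∈ (Icc (0:ℝ) 1) ×ˢ (Icc (0:ℝ) (2 * Real.pi)),
      (v p).1 ^ 2 + (v p).2 ^ 2 = 1)
    (hper : ∀ r ∈ Icc (0:ℝ) 1, v (r, 0) = v (r, 2 * Real.pi))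
    {r : ℝ} (hr : r ∈ Icc (0:ℝ) 1) :
    (∫ t in (0:ℝ)..(2 * Real.pi), s7W v (r, t)) = 0 := by
  have hpi : (0:ℝ) ≤ 2 * Real.pi := by positivity
  have h1 : (∫ t in (0:ℝ)..(2 * Real.pi), s7W v (r, t))
      = ∫ t in (0:ℝ)..(2 * Real.pi), s7W2 v (r, t) := by
    apply intervalIntegral.integral_congr
    intro t ht
    rw [uIcc_of_le hpi] at ht
    exact s7W_eq_W2 hv hnorm (Set.mk_mem_prod hr ht)
  rw [h1]
  have h2 : (∫ t in (0:ℝ)..(2 * Real.pi), s7W2 v (r, t))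
      = s7u v (r, 2 * Real.pi) - s7u v (r, 0) := by
    apply intervalIntegral.integral_eq_sub_of_hasDerivAt (f := fun t => s7u v (r, t))
      (f' := fun t => s7W2 v (r, t))
    · exact fun t _ => s7u_hasDerivAt hv r t
    · exact ((s7W2_cont hv).comp (by fun_prop)).intervalIntegrable _ _
  rw [h2]
  have e1 := hper r hr
  have e2 := stmt7_vr_per hv hper hr
  simp only [s7u, e1, e2]
  ring

end core2

section final
variable {v : ℝ × ℝ → ℝ × ℝ}

lemma s7_hasDerivAt_integral (hv : ContDiff ℝ 2 v) (r₀ : ℝ) :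
    HasDerivAt (fun x => ∫ t in (0:ℝ)..(2 * Real.pi), s7w v (x, t))
      (∫ t in (0:ℝ)..(2 * Real.pi), s7W v (r₀, t)) r₀ := by
  have hwc := s7w_cont hv
  have hWc := s7W_cont hv
  obtain ⟨C, hC⟩ : ∃ C, ∀ p ∈ (Icc (r₀ - 1) (r₀ + 1)) ×ˢ (Icc (0:ℝ) (2 * Real.pi)),
      ‖s7W v p‖ ≤ C :=
    (isCompact_Icc.prod isCompact_Icc).exists_bound_of_continuousOn hWc.continuousOn
  have main := intervalIntegral.hasDerivAt_integral_of_dominated_loc_of_deriv_le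
    (μ := volume) (F := fun x t => s7w v (x, t)) (F' := fun x t => s7W v (x, t)) (x₀ := r₀)
    (bound := fun _ => C) (s := ball r₀ 1) (ball_mem_nhds r₀ one_pos)
    (Filter.Eventually.of_forall fun x =>
      ((hwc.comp (by fun_prop : Continuous fun t : ℝ => (x, t))).aestronglyMeasurable))
    ((hwc.comp (by fun_prop : Continuous fun t : ℝ => (r₀, t))).intervalIntegrable _ _)
    ((hWc.comp (by fun_prop : Continuous fun t : ℝ => (r₀, t))).aestronglyMeasurable)
    (Filter.Eventually.of_forall fun t ht => fun x hx => by
      apply hC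
      constructor
      · have := abs_lt.mp (by simpa [Real.dist_eq] using mem_ball.mp hx)
        constructor <;> linarith [this.1, this.2]
      · have h1 : t ∈ Set.Ioc (0:ℝ) (2 * Real.pi) := by
          rwa [Set.uIoc_of_le (by positivity : (0:ℝ) ≤ 2 * Real.pi)] at ht
        exact ⟨le_of_lt h1.1, h1.2⟩)
    (intervalIntegrable_const)
    (Filter.Eventually.of_forall fun t ht => fun x hx => s7w_hasDerivAt hv t x)
  exact main.2

end final

/-- For a `C²` family of closed unit-circle-valued curves `θ ↦ v(r,θ)`, the winding
integral `∫₀^{2π} v(r,·) ∧ ∂_θ v(r,·)` does not depend on `r ∈ [0,1]`. -/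
theorem stmt7 (v : ℝ × ℝ → ℝ × ℝ) (hv : ContDiff ℝ 2 v)
    (hnorm : ∀ r ∈ Set.Icc (0:ℝ) 1, ∀ θ ∈ Set.Icc (0:ℝ) (2 * Real.pi),
      (v (r, θ)).1 ^ 2 + (v (r, θ)).2 ^ 2 = 1)
    (hper : ∀ r ∈ Set.Icc (0:ℝ) 1, v (r, 0) = v (r, 2 * Real.pi)) :
    ∀ r₁ ∈ Set.Icc (0:ℝ) 1, ∀ r₂ ∈ Set.Icc (0:ℝ) 1,
      (∫ θ in (0:ℝ)..(2 * Real.pi),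
          ((v (r₁, θ)).1 * (deriv (fun t => v (r₁, t)) θ).2
            - (v (r₁, θ)).2 * (deriv (fun t => v (r₁, t)) θ).1))
        = ∫ θ in (0:ℝ)..(2 * Real.pi),
          ((v (r₂, θ)).1 * (deriv (fun t => v (r₂, t)) θ).2
            - (v (r₂, θ)).2 * (deriv (fun t => v (r₂, t)) θ).1) := by
  intro r₁ hr₁ r₂ hr₂
  have hnorm' : ∀ p ∈ (Icc (0:ℝ) 1) ×ˢ (Icc (0:ℝ) (2 * Real.pi)),
      (v p).1 ^ 2 + (v p).2 ^ 2 = 1 := fun p hp => by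
    have := hnorm p.1 hp.1 p.2 hp.2
    simpa using this
  have hderiv_eq : ∀ r θ : ℝ, deriv (fun t => v (r, t)) θ = fderiv ℝ v (r, θ) (0, 1) :=
    fun r θ => (stmt7_slice hv ((hasDerivAt_const θ r).prodMk (hasDerivAt_id θ))).deriv
  have hΦ0 : ∀ r₀ ∈ Icc (0:ℝ) 1,
      HasDerivAt (fun x => ∫ t in (0:ℝ)..(2 * Real.pi), s7w v (x, t)) 0 r₀ := by
    intro r₀ hr₀
    have h := s7_hasDerivAt_integral hv r₀
    rwa [s7_integral_W_zero hv hnorm' hper hr₀] at h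
  have hconst := constant_of_has_deriv_right_zero
    (f := fun x => ∫ t in (0:ℝ)..(2 * Real.pi), s7w v (x, t))
    (fun x hx => ((hΦ0 x hx).continuousAt).continuousWithinAt)
    (fun x hx => ((hΦ0 x (Ico_subset_Icc_self hx)).hasDerivWithinAt))
  have e1 := hconst r₁ hr₁
  have e2 := hconst r₂ hr₂
  simp only [hderiv_eq]
  have key : (∫ t in (0:ℝ)..(2 * Real.pi), s7w v (r₁, t))
      = ∫ t in (0:ℝ)..(2 * Real.pi), s7w v (r₂, t) := e1.trans e2.symm
  simpa only [s7w] using key
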